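/- Let x_1 ≥ ... ≥ x_n be reals summing to zero with n ≥ 2k, and set A = {1,...,k}, b_A = ∑_{i=1}^k x_i. Then ∑ over k-element subsets S with |S ∩ A| = 1 of b_S equals (C(n-k-1,k-1) - (k-1)·C(n-k-1,k-2))·b_A, where b_S = ∑_{i∈S} x_i. -/

import Mathlib

open Finset

lemma count_mem_psc (s : Finset ℕ) (m : ℕ) (i : ℕ) (hi : i ∈ s) :
    ((s.powersetCard (m+1)).filter (fun T => i ∈ T)).card = (s.card - 1).choose m := by
  have : ((s.powersetCard (m+1)).filter (fun T => i ∈ T)).card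
      = ((s.erase i).powersetCard m).card := by
    apply Finset.card_nbij' (fun T => T.erase i) (fun T => insert i T)
    · intro T hT
      simp only [mem_coe, mem_filter, mem_powersetCard] at hT
      obtain ⟨⟨hsub, hcard⟩, hiT⟩ := hT
      rw [mem_coe, mem_powersetCard]
      exact ⟨erase_subset_erase i hsub, by rw [card_erase_of_mem hiT, hcard]; rfl⟩
    · intro T hT
      rw [mem_coe, mem_powersetCard] at hT
      obtain ⟨hsub, hcard⟩ := hT
      have hiT : i ∉ T := fun h => (mem_erase.mp (hsub h)).1 rfl
      simp only [mem_coe, mem_filter, mem_powersetCard]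
      refine ⟨⟨?_, ?_⟩, mem_insert_self i T⟩
      · exact insert_subset hi (hsub.trans (erase_subset i s))
      · rw [card_insert_of_notMem hiT, hcard]
    · intro T hT
      simp only [mem_coe, mem_filter] at hT
      exact insert_erase hT.2
    · intro T hT
      rw [mem_coe, mem_powersetCard] at hT
      have hiT : i ∉ T := fun h => (mem_erase.mp (hT.1 h)).1 rfl
      exact erase_insert hiT
  rw [this, card_powersetCard, card_erase_of_mem hi]

lemma sum_psc (s : Finset ℕ) (m : ℕ) (f : ℕ → ℝ) :
    ∑ T ∈ s.powersetCard (m+1), ∑ i ∈ T, f i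
      = ((s.card - 1).choose m : ℝ) * ∑ i ∈ s, f i := by
  have h1 : ∀ T ∈ s.powersetCard (m+1), ∑ i ∈ T, f i
      = ∑ i ∈ s, if i ∈ T then f i else 0 := by
    intro T hT
    rw [mem_powersetCard] at hT
    rw [← Finset.sum_filter, Finset.filter_mem_eq_inter, Finset.inter_comm,
      Finset.inter_eq_left.mpr hT.1]
  rw [Finset.sum_congr rfl h1, Finset.sum_comm]
  rw [Finset.mul_sum]
  apply Finset.sum_congr rfl
  intro i hi
  rw [Finset.sum_ite, Finset.sum_const, Finset.sum_const_zero, add_zero,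
    count_mem_psc s m i hi, nsmul_eq_mul]

lemma bij_key (n k : ℕ) (x : ℕ → ℝ) (hk : 1 ≤ k) (hn : 2 * k ≤ n) :
    (∑ S ∈ ((Finset.range n).powersetCard k).filter
        (fun S => (S ∩ Finset.range k).card = 1), ∑ i ∈ S, x i)
      = ∑ p ∈ (Finset.range k) ×ˢ ((Finset.Ico k n).powersetCard (k-1)),
          ∑ i ∈ insert p.1 p.2, x i := by
  apply Finset.sum_nbij' (fun S => ((S ∩ Finset.range k).sum id, S \ Finset.range k))
    (fun p => insert p.1 p.2)
  · intro S hS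
    simp only [mem_filter, mem_powersetCard] at hS
    obtain ⟨⟨hsub, hcard⟩, hone⟩ := hS
    obtain ⟨a, ha⟩ := Finset.card_eq_one.mp hone
    have haS : a ∈ S ∩ Finset.range k := ha ▸ Finset.mem_singleton_self a
    rw [Finset.mem_inter, Finset.mem_range] at haS
    rw [ha, Finset.sum_singleton, Finset.mem_product]
    dsimp only
    constructor
    · simpa [id] using Finset.mem_range.mpr haS.2
    · rw [mem_powersetCard]
      constructor
      · intro i hi
        rw [Finset.mem_sdiff, Finset.mem_range] at hi
        have := Finset.mem_range.mp (hsub hi.1)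
        exact Finset.mem_Ico.mpr ⟨by omega, this⟩
      · have := Finset.card_inter_add_card_sdiff S (Finset.range k)
        omega
  · intro p hp
    rw [Finset.mem_product, Finset.mem_range, mem_powersetCard] at hp
    obtain ⟨ha, hTsub, hTcard⟩ := hp
    have hge : ∀ i ∈ p.2, k ≤ i := fun i hi => (Finset.mem_Ico.mp (hTsub hi)).1
    have hnot : p.1 ∉ p.2 := fun h => by have := hge _ h; omega
    simp only [mem_filter, mem_powersetCard]
    refine ⟨⟨?_, ?_⟩, ?_⟩
    · intro i hi
      rcases Finset.mem_insert.mp hi with rfl | hi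
      · exact Finset.mem_range.mpr (by omega)
      · exact Finset.mem_range.mpr (Finset.mem_Ico.mp (hTsub hi)).2
    · rw [Finset.card_insert_of_notMem hnot, hTcard]; omega
    · have : insert p.1 p.2 ∩ Finset.range k = {p.1} := by
        ext i
        simp only [Finset.mem_inter, Finset.mem_insert, Finset.mem_range,
          Finset.mem_singleton]
        constructor
        · rintro ⟨rfl | hi, hik⟩
          · rfl
          · exact absurd (hge _ hi) (by omega)
        · rintro rfl; exact ⟨Or.inl rfl, ha⟩
      rw [this]; simp
  · intro S hS
    simp only [mem_filter, mem_powersetCard] at hS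
    obtain ⟨⟨hsub, hcard⟩, hone⟩ := hS
    obtain ⟨a, ha⟩ := Finset.card_eq_one.mp hone
    have haS : a ∈ S ∩ Finset.range k := ha ▸ Finset.mem_singleton_self a
    rw [Finset.mem_inter, Finset.mem_range] at haS
    rw [ha, Finset.sum_singleton]
    ext i
    simp only [Finset.mem_insert, Finset.mem_sdiff, Finset.mem_range, id]
    constructor
    · rintro (rfl | ⟨hi, _⟩)
      · exact haS.1
      · exact hi
    · intro hi
      by_cases hik : i < k
      · left
        have : i ∈ S ∩ Finset.range k := Finset.mem_inter.mpr ⟨hi, Finset.mem_range.mpr hik⟩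
        rw [ha, Finset.mem_singleton] at this; exact this
      · right; exact ⟨hi, hik⟩
  · intro p hp
    rw [Finset.mem_product, Finset.mem_range, mem_powersetCard] at hp
    obtain ⟨ha, hTsub, hTcard⟩ := hp
    have hge : ∀ i ∈ p.2, k ≤ i := fun i hi => (Finset.mem_Ico.mp (hTsub hi)).1
    have h1 : insert p.1 p.2 ∩ Finset.range k = {p.1} := by
      ext i
      simp only [Finset.mem_inter, Finset.mem_insert, Finset.mem_range, Finset.mem_singleton]
      constructor
      · rintro ⟨rfl | hi, hik⟩
        · rfl
        · exact absurd (hge _ hi) (by omega)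
      · rintro rfl; exact ⟨Or.inl rfl, ha⟩
    have h2 : insert p.1 p.2 \ Finset.range k = p.2 := by
      ext i
      simp only [Finset.mem_sdiff, Finset.mem_insert, Finset.mem_range]
      constructor
      · rintro ⟨rfl | hi, hik⟩
        · omega
        · exact hi
      · intro hi; exact ⟨Or.inr hi, by have := hge _ hi; omega⟩
    rw [h1, h2, Finset.sum_singleton]
    simp
  · intro S hS
    simp only [mem_filter, mem_powersetCard] at hS
    obtain ⟨⟨hsub, hcard⟩, hone⟩ := hS
    obtain ⟨a, ha⟩ := Finset.card_eq_one.mp hone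
    have haS : a ∈ S ∩ Finset.range k := ha ▸ Finset.mem_singleton_self a
    rw [Finset.mem_inter, Finset.mem_range] at haS
    rw [ha, Finset.sum_singleton]
    congr 1
    ext i
    simp only [Finset.mem_insert, Finset.mem_sdiff, Finset.mem_range, id]
    constructor
    · intro hi
      by_cases hik : i < k
      · left
        have : i ∈ S ∩ Finset.range k := Finset.mem_inter.mpr ⟨hi, Finset.mem_range.mpr hik⟩
        rw [ha, Finset.mem_singleton] at this; exact this
      · right; exact ⟨hi, hik⟩
    · rintro (rfl | ⟨hi, _⟩)
      · exact haS.1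
      · exact hi

theorem stmt_13 (n k : ℕ) (x : ℕ → ℝ)
    (hmono : ∀ i j, i ≤ j → j < n → x j ≤ x i)
    (hsum : ∑ i ∈ Finset.range n, x i = 0)
    (hk : 1 ≤ k) (hn : 2 * k ≤ n) :
    (∑ S ∈ ((Finset.range n).powersetCard k).filter
        (fun S => (S ∩ Finset.range k).card = 1), ∑ i ∈ S, x i)
      = (((n - k - 1).choose (k - 1) : ℝ) - (k - 1 : ℝ) * ((n - k - 1).choose (k - 2) : ℝ))
          * ∑ i ∈ Finset.range k, x i := by
  rw [bij_key n k x hk hn, Finset.sum_product]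
  have hins : ∀ a ∈ Finset.range k, ∀ T ∈ (Finset.Ico k n).powersetCard (k-1),
      ∑ i ∈ insert a T, x i = x a + ∑ i ∈ T, x i := by
    intro a ha T hT
    rw [mem_powersetCard] at hT
    have : a ∉ T := fun h => by
      have := (Finset.mem_Ico.mp (hT.1 h)).1
      have := Finset.mem_range.mp ha
      omega
    rw [Finset.sum_insert this]
  rw [Finset.sum_congr rfl (fun a ha => Finset.sum_congr rfl (hins a ha))]
  have hB : ∑ i ∈ Finset.Ico k n, x i = - ∑ i ∈ Finset.range k, x i := by
    rw [Finset.range_eq_Ico] at hsum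
    have := Finset.sum_Ico_consecutive x (Nat.zero_le k) (by omega : k ≤ n)
    rw [hsum] at this
    rw [Finset.range_eq_Ico]
    linarith
  have hPcard : ((Finset.Ico k n).powersetCard (k-1)).card = (n-k).choose (k-1) := by
    rw [card_powersetCard, Nat.card_Ico]
  have step : ∑ a ∈ Finset.range k, ∑ T ∈ (Finset.Ico k n).powersetCard (k-1),
        (x a + ∑ i ∈ T, x i)
      = ((n-k).choose (k-1) : ℝ) * ∑ a ∈ Finset.range k, x a
        + (k : ℝ) * ∑ T ∈ (Finset.Ico k n).powersetCard (k-1), ∑ i ∈ T, x i := by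
    simp_rw [Finset.sum_add_distrib, Finset.sum_const, hPcard, nsmul_eq_mul]
    rw [← Finset.mul_sum, Finset.card_range]
  rw [step]
  rcases Nat.lt_or_ge k 2 with h2 | h2
  · have hk1 : k = 1 := by omega
    subst hk1
    simp only [Nat.sub_self, Finset.powersetCard_zero, Finset.sum_singleton,
      Finset.sum_empty, Nat.choose_self]
    norm_num
  · have hc : ∑ T ∈ (Finset.Ico k n).powersetCard (k-1), ∑ i ∈ T, x i
        = ((n-k-1).choose (k-2) : ℝ) * ∑ i ∈ Finset.Ico k n, x i := by
      have hm : k - 1 = (k-2) + 1 := by omega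
      rw [hm, sum_psc]
      congr 3
      rw [Nat.card_Ico]
    rw [hc, hB]
    have hp : (n-k).choose (k-1) = (n-k-1).choose (k-2) + (n-k-1).choose (k-1) := by
      have e1 : n - k = (n-k-1) + 1 := by omega
      have e2 : k - 1 = (k-2) + 1 := by omega
      rw [e1, e2, Nat.choose_succ_succ, ← e1]
    rw [hp]
    have hkc : ((k : ℝ)) = ((k - 1 : ℕ) : ℝ) + 1 := by
      push_cast [Nat.cast_sub hk]; ring
    push_cast
    ring_nf
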